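/- Let b = (b_1,...,b_d) be a vector of positive integers with even sum 2β, and let P_b = [0,1]^{d+2} ∩ {x : ∑_{i=1}^d b_i x_i - β x_{d+1} + (β+1/2) x_{d+2} ≤ β + 1/4}. Then P_b is a simple polytope of dimension d+2, i.e., P_b is full-dimensional and every vertex of P_b satisfies exactly d+2 of the defining inequalities with equality. -/

import Mathlib

lemma aux_not_extreme {n : ℕ} (w : Fin n → ℝ) (c : ℝ) (P : Set (Fin n → ℝ))
    (hP : P = {x | (∀ i, 0 ≤ x i ∧ x i ≤ 1) ∧ ∑ i, w i * x i ≤ c})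
    (x v : Fin n → ℝ) (hx : x ∈ P) (hv : v ≠ 0)
    (hsup : ∀ i, v i ≠ 0 → 0 < x i ∧ x i < 1)
    (hkn : ∑ i, w i * v i = 0 ∨ ∑ i, w i * x i < c) :
    x ∉ Set.extremePoints ℝ P := by
  rw [hP] at hx
  obtain ⟨hxb, hxk⟩ := hx
  obtain ⟨i₀, hi₀⟩ : ∃ i, v i ≠ 0 := by
    by_contra h; push_neg at h; exact hv (funext h)
  have hne : (Finset.univ : Finset (Fin n)).Nonempty := ⟨i₀, Finset.mem_univ _⟩
  classical
  set g : Fin n → ℝ := fun i => if v i = 0 then 1 else min (x i) (1 - x i) / |v i| with hg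
  set δ : ℝ := Finset.univ.inf' hne g with hδ
  have hδpos : 0 < δ := by
    rw [hδ, Finset.lt_inf'_iff]
    intro i _
    by_cases h : v i = 0
    · simp [hg, h]
    · have h1 := hsup i h
      have h2 : 0 < |v i| := abs_pos.2 h
      simp only [hg, if_neg h]
      have : 0 < min (x i) (1 - x i) := lt_min h1.1 (by linarith [h1.2])
      positivity
  have habs : ∀ ε : ℝ, 0 < ε → ε ≤ δ → ∀ i, ε * |v i| ≤ min (x i) (1 - x i) := by
    intro ε hε hεδ i
    by_cases h : v i = 0
    · rw [h]
      simp only [abs_zero, mul_zero]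
      exact le_min (hxb i).1 (by linarith [(hxb i).2])
    · have h2 : 0 < |v i| := abs_pos.2 h
      have hgi : ε ≤ g i := le_trans hεδ (Finset.inf'_le _ (Finset.mem_univ i))
      rw [hg] at hgi
      simp only [if_neg h] at hgi
      calc ε * |v i| ≤ (min (x i) (1 - x i) / |v i|) * |v i| := by nlinarith
        _ = min (x i) (1 - x i) := by field_simp
  set T : ℝ := ∑ i, w i * v i with hT
  obtain ⟨ε, hε, hεδ, hεk⟩ : ∃ ε : ℝ, 0 < ε ∧ ε ≤ δ ∧ ε * |T| ≤ c - ∑ i, w i * x i := by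
    rcases hkn with h | h
    · refine ⟨δ, hδpos, le_refl _, ?_⟩
      rw [h]
      simp only [abs_zero, mul_zero]
      linarith
    · have hslack : 0 < c - ∑ i, w i * x i := by linarith
      have h2 : (0:ℝ) ≤ |T| := abs_nonneg _
      have h3 : (0:ℝ) < 1 + |T| := by linarith
      have hqpos : 0 < (c - ∑ i, w i * x i) / (1 + |T|) := div_pos hslack h3
      refine ⟨min δ ((c - ∑ i, w i * x i) / (1 + |T|)), lt_min hδpos hqpos, min_le_left _ _, ?_⟩
      have h1 : min δ ((c - ∑ i, w i * x i) / (1 + |T|)) ≤ (c - ∑ i, w i * x i) / (1 + |T|) :=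
        min_le_right _ _
      have h4 : (c - ∑ i, w i * x i) / (1 + |T|) * |T| ≤ c - ∑ i, w i * x i := by
        rw [div_mul_eq_mul_div, div_le_iff₀ h3]
        nlinarith
      calc min δ ((c - ∑ i, w i * x i) / (1 + |T|)) * |T|
          ≤ (c - ∑ i, w i * x i) / (1 + |T|) * |T| :=
            mul_le_mul_of_nonneg_right h1 (abs_nonneg _)
        _ ≤ _ := h4
  have hlin : ∀ s : ℝ, ∑ i, w i * (x i + s * v i) = ∑ i, w i * x i + s * T := by
    intro s
    rw [hT, Finset.mul_sum, ← Finset.sum_add_distrib]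
    exact Finset.sum_congr rfl fun i _ => by ring
  have hmem : ∀ s : ℝ, |s| ≤ ε → (fun i => x i + s * v i) ∈ P := by
    intro s hs
    rw [hP]
    refine ⟨fun i => ?_, ?_⟩
    · have h1 := habs ε hε hεδ i
      have h2 : |s * v i| ≤ ε * |v i| := by
        rw [abs_mul]; exact mul_le_mul_of_nonneg_right hs (abs_nonneg _)
      have h3 := abs_le.1 (le_trans h2 h1)
      have h4 := min_le_left (x i) (1 - x i)
      have h5 := min_le_right (x i) (1 - x i)
      constructor
      · show (0:ℝ) ≤ x i + s * v i
        linarith [h3.1]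
      · show x i + s * v i ≤ 1
        linarith [h3.2]
    · show ∑ i, w i * (x i + s * v i) ≤ c
      rw [hlin]
      have : s * T ≤ ε * |T| := by
        calc s * T ≤ |s * T| := le_abs_self _
          _ = |s| * |T| := abs_mul _ _
          _ ≤ ε * |T| := mul_le_mul_of_nonneg_right hs (abs_nonneg _)
      linarith
  intro hext
  rw [mem_extremePoints] at hext
  have hy : (fun i => x i + ε * v i) ∈ P := hmem ε (by rw [abs_of_pos hε])
  have hz : (fun i => x i + (-ε) * v i) ∈ P := hmem (-ε) (by rw [abs_neg, abs_of_pos hε])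
  have hseg : x ∈ openSegment ℝ (fun i => x i + ε * v i) (fun i => x i + (-ε) * v i) := by
    refine ⟨1/2, 1/2, by norm_num, by norm_num, by norm_num, ?_⟩
    funext i
    simp only [Pi.add_apply, Pi.smul_apply, smul_eq_mul]
    ring
  have heq := (hext.2 _ hy _ hz hseg).1
  have h0 := congrFun heq i₀
  have : ε * v i₀ = 0 := by linarith
  exact hi₀ ((mul_eq_zero.1 this).resolve_left (ne_of_gt hε))

open Classical in
theorem Pb_simple (d : ℕ) (b : Fin d → ℤ) (hb : ∀ i, 0 < b i)
    (β : ℤ) (hβ : ∑ i, b i = 2 * β)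
    (w : Fin (d + 2) → ℝ)
    (hw : ∀ i : Fin (d + 2), w i =
      if h : (i : ℕ) < d then (b ⟨i, h⟩ : ℝ)
      else if (i : ℕ) = d then -(β : ℝ) else (β : ℝ) + 1/2)
    (P : Set (Fin (d + 2) → ℝ))
    (hP : P = {x | (∀ i, 0 ≤ x i ∧ x i ≤ 1) ∧ ∑ i, w i * x i ≤ (β : ℝ) + 1/4}) :
    (interior P).Nonempty ∧
    ∀ x ∈ Set.extremePoints ℝ P,
      ((Finset.univ.filter fun i : Fin (d + 2) => x i = 0).card
        + (Finset.univ.filter fun i : Fin (d + 2) => x i = 1).card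
        + (if ∑ i, w i * x i = (β : ℝ) + 1/4 then 1 else 0)) = d + 2 := by
  have hβ0 : 0 ≤ β := by
    have h0 : (0:ℤ) ≤ ∑ i, b i := Finset.sum_nonneg fun i _ => (hb i).le
    omega
  have hβ0' : (0:ℝ) ≤ (β:ℝ) := by exact_mod_cast hβ0
  have hwlt : ∀ (i : Fin (d+2)) (h : (i:ℕ) < d), w i = (b ⟨i, h⟩ : ℝ) := by
    intro i h; rw [hw i, dif_pos h]
  have hwd : ∀ i : Fin (d+2), (i:ℕ) = d → w i = -(β:ℝ) := by
    intro i h; rw [hw i, dif_neg (by omega), if_pos h]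
  have hwd1 : ∀ i : Fin (d+2), (i:ℕ) = d+1 → w i = (β:ℝ) + 1/2 := by
    intro i h; rw [hw i, dif_neg (by omega), if_neg (by omega)]
  have hwsum : ∑ i, w i = 2*(β:ℝ) + 1/2 := by
    rw [Fin.sum_univ_castSucc, Fin.sum_univ_castSucc]
    have e1 : ∀ i : Fin d, w (i.castSucc.castSucc) = (b i : ℝ) := by
      intro i
      have hlt : ((i.castSucc.castSucc : Fin (d+2)) : ℕ) < d := by simp [i.isLt]
      rw [hwlt _ hlt]
      have heq2 : (⟨((i.castSucc.castSucc : Fin (d+2)) : ℕ), hlt⟩ : Fin d) = i :=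
        Fin.ext (by simp)
      rw [heq2]
    rw [Finset.sum_congr rfl (fun i _ => e1 i)]
    rw [hwd ((Fin.last d).castSucc) (by simp), hwd1 (Fin.last (d+1)) (by simp)]
    have hcast : ∑ i : Fin d, (b i : ℝ) = ((∑ i, b i : ℤ) : ℝ) := by push_cast; rfl
    rw [hcast, hβ]
    push_cast
    ring
  -- nonzero weights: at most index d (when β = 0) can vanish
  have hwzero : ∀ i : Fin (d+2), w i = 0 → (i:ℕ) = d := by
    intro i h
    by_cases h1 : (i:ℕ) < d
    · exfalso
      rw [hwlt i h1] at h
      have := hb ⟨i, h1⟩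
      have : (0:ℝ) < (b ⟨i, h1⟩ : ℝ) := by exact_mod_cast this
      linarith
    · by_cases h2 : (i:ℕ) = d
      · exact h2
      · exfalso
        have hlt2 := i.isLt
        have h3 : (i:ℕ) = d + 1 := by omega
        rw [hwd1 i h3] at h
        linarith
  constructor
  · -- interior nonempty
    refine ⟨fun _ => 1/4, ?_⟩
    rw [mem_interior]
    refine ⟨{x | ∀ i, 0 < x i ∧ x i < 1} ∩ {x | ∑ i, w i * x i < (β:ℝ)+1/4}, ?_, ?_, ?_, ?_⟩
    · rw [hP]; rintro y ⟨h1, h2⟩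
      exact ⟨fun i => ⟨(h1 i).1.le, (h1 i).2.le⟩, h2.le⟩
    · apply IsOpen.inter
      · have heq : {x : Fin (d+2) → ℝ | ∀ i, 0 < x i ∧ x i < 1}
            = ⋂ i, ({x | 0 < x i} ∩ {x | x i < 1}) := by
          ext y; simp [Set.mem_iInter]
        rw [heq]
        exact isOpen_iInter_of_finite fun i =>
          (isOpen_lt continuous_const (continuous_apply i)).inter
            (isOpen_lt (continuous_apply i) continuous_const)
      · exact isOpen_lt (continuous_finset_sum _ fun i _ => continuous_const.mul (continuous_apply i)) continuous_const
    · intro i; norm_num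
    · show ∑ i, w i * (1/4:ℝ) < (β:ℝ) + 1/4
      have : ∑ i, w i * (1/4:ℝ) = (∑ i, w i) * (1/4) := by rw [Finset.sum_mul]
      rw [this, hwsum]
      linarith
  · -- simplicity
    intro x hxe
    have hxP : x ∈ P := hxe.1
    have hxb : ∀ i, 0 ≤ x i ∧ x i ≤ 1 := by rw [hP] at hxP; exact hxP.1
    have hxk : ∑ i, w i * x i ≤ (β:ℝ)+1/4 := by rw [hP] at hxP; exact hxP.2
    have hfrac : ∀ i : Fin (d+2), ¬(x i = 0 ∨ x i = 1) → 0 < x i ∧ x i < 1 := by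
      intro i h
      push_neg at h
      exact ⟨lt_of_le_of_ne (hxb i).1 (Ne.symm h.1), lt_of_le_of_ne (hxb i).2 h.2⟩
    set F := Finset.univ.filter (fun i : Fin (d+2) => ¬(x i = 0 ∨ x i = 1)) with hF
    have hcards : (Finset.univ.filter fun i : Fin (d+2) => x i = 0).card
        + (Finset.univ.filter fun i : Fin (d+2) => x i = 1).card + F.card = d+2 := by
      have h1 := Finset.card_filter_add_card_filter_not
        (s := (Finset.univ : Finset (Fin (d+2)))) (p := fun i => x i = 0 ∨ x i = 1)
      rw [Finset.filter_or] at h1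
      have hdisj : Disjoint (Finset.univ.filter fun i : Fin (d+2) => x i = 0)
          (Finset.univ.filter fun i : Fin (d+2) => x i = 1) := by
        rw [Finset.disjoint_left]
        intro a ha hb2
        rw [Finset.mem_filter] at ha hb2
        rw [ha.2] at hb2
        norm_num at hb2
      rw [Finset.card_union_of_disjoint hdisj] at h1
      simpa [hF, Finset.card_univ] using h1
    -- helper: sum against a single-coordinate direction
    have hsingle : ∀ (j : Fin (d+2)) (a : ℝ),
        ∑ i, w i * (if i = j then a else 0) = w j * a := by
      intro j a
      rw [Finset.sum_eq_single j]
      · simp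
      · intro i _ hne; simp [hne]
      · intro h; exact absurd (Finset.mem_univ j) h
    rcases Nat.lt_or_ge F.card 1 with hc | hc
    · -- F empty : all coordinates integral, knapsack not tight
      have hF0 : F.card = 0 := by omega
      have hall : ∀ i, x i = 0 ∨ x i = 1 := by
        intro i
        by_contra h
        have : i ∈ F := by rw [hF, Finset.mem_filter]; exact ⟨Finset.mem_univ i, h⟩
        rw [Finset.card_eq_zero] at hF0
        rw [hF0] at this
        exact absurd this (Finset.notMem_empty i)
      have h2w : ∀ i : Fin (d+2), ∃ m : ℤ, 2 * w i = (m:ℝ) := by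
        intro i
        by_cases h1 : (i:ℕ) < d
        · exact ⟨2 * b ⟨i, h1⟩, by rw [hwlt i h1]; push_cast; ring⟩
        · by_cases h2 : (i:ℕ) = d
          · exact ⟨-(2*β), by rw [hwd i h2]; push_cast; ring⟩
          · exact ⟨2*β+1, by rw [hwd1 i (by omega)]; push_cast; ring⟩
      have hint : ∃ M : ℤ, 2 * ∑ i, w i * x i = (M:ℝ) := by
        have hm : ∀ i : Fin (d+2), ∃ m : ℤ, 2 * (w i * x i) = (m:ℝ) := by
          intro i
          rcases hall i with h | h
          · exact ⟨0, by rw [h]; simp⟩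
          · obtain ⟨m, hm⟩ := h2w i
            exact ⟨m, by rw [h]; rw [mul_one]; linarith [hm]⟩
        choose m hm using hm
        refine ⟨∑ i, m i, ?_⟩
        rw [Finset.mul_sum]
        rw [Finset.sum_congr rfl (fun i _ => hm i)]
        push_cast
        rfl
      have hnt : ∑ i, w i * x i ≠ (β:ℝ) + 1/4 := by
        intro h
        obtain ⟨M, hM⟩ := hint
        rw [h] at hM
        have : (2*M:ℝ) = 4*(β:ℝ) + 1 := by push_cast; linarith
        have : (2*M:ℤ) = 4*β + 1 := by exact_mod_cast this
        omega
      rw [if_neg hnt]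
      omega
    rcases Nat.lt_or_ge F.card 2 with hc2 | hc2
    · -- exactly one fractional coordinate : knapsack must be tight
      have hF1 : F.card = 1 := by omega
      obtain ⟨j, hj⟩ := Finset.card_eq_one.1 hF1
      have hjF : j ∈ F := by rw [hj]; exact Finset.mem_singleton_self j
      rw [hF, Finset.mem_filter] at hjF
      have hjfrac := hfrac j hjF.2
      have ht : ∑ i, w i * x i = (β:ℝ) + 1/4 := by
        by_contra hnt
        have hlt : ∑ i, w i * x i < (β:ℝ) + 1/4 := lt_of_le_of_ne hxk hnt
        refine aux_not_extreme w ((β:ℝ)+1/4) P hP x (fun i => if i = j then 1 else 0)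
          hxP ?_ ?_ (Or.inr hlt) hxe
        · intro h
          have := congrFun h j
          simp at this
        · intro i hi
          by_cases h : i = j
          · rw [h]; exact hjfrac
          · simp [h] at hi
      rw [if_pos ht]
      omega
    · -- at least two fractional coordinates : contradiction
      exfalso
      obtain ⟨j, hjF, k, hkF, hjk⟩ := Finset.one_lt_card.1 hc2
      rw [hF, Finset.mem_filter] at hjF hkF
      have hjfrac := hfrac j hjF.2
      have hkfrac := hfrac k hkF.2
      by_cases hwj : w j = 0
      · refine aux_not_extreme w ((β:ℝ)+1/4) P hP x (fun i => if i = j then 1 else 0)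
          hxP ?_ ?_ (Or.inl ?_) hxe
        · intro h; have := congrFun h j; simp at this
        · intro i hi
          by_cases h : i = j
          · rw [h]; exact hjfrac
          · simp [h] at hi
        · rw [hsingle j 1, hwj]; ring
      by_cases hwk : w k = 0
      · refine aux_not_extreme w ((β:ℝ)+1/4) P hP x (fun i => if i = k then 1 else 0)
          hxP ?_ ?_ (Or.inl ?_) hxe
        · intro h; have := congrFun h k; simp at this
        · intro i hi
          by_cases h : i = k
          · rw [h]; exact hkfrac
          · simp [h] at hi
        · rw [hsingle k 1, hwk]; ring
      · refine aux_not_extreme w ((β:ℝ)+1/4) P hP x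
          (fun i => if i = j then w k else if i = k then -(w j) else 0)
          hxP ?_ ?_ (Or.inl ?_) hxe
        · intro h
          have := congrFun h j
          simp [hjk] at this
          exact hwk this
        · intro i hi
          by_cases h : i = j
          · rw [h]; exact hjfrac
          · by_cases h2 : i = k
            · rw [h2]; exact hkfrac
            · simp [h, h2] at hi
        · have hsplit : ∀ i : Fin (d+2),
              w i * (if i = j then w k else if i = k then -(w j) else 0)
              = w i * (if i = j then w k else 0) + w i * (if i = k then -(w j) else 0) := by
            intro i
            by_cases h : i = j
            · have h2 : i ≠ k := by rw [h]; exact hjk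
              simp [h, h2, hjk]
            · by_cases h2 : i = k
              · simp [h, h2, Ne.symm hjk]
              · simp [h, h2]
          rw [Finset.sum_congr rfl (fun i _ => hsplit i), Finset.sum_add_distrib,
            hsingle j (w k), hsingle k (-(w j))]
          ring
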